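/- Let seats be allocated to parties by the D'Hondt method: party p with true vote count v(p) receives s(p) seats where the S cells with largest values v(p)/k (k = 1,...,S) across all parties are selected, with no ties. Let s_rep be any reported seat allocation with Σ_p s_rep(p) = S. If for two parties p₁ ≠ p₂ the inequality v(p₁)/(s_rep(p₁)+1) < v(p₂)/s_rep(p₂) holds, then it is not the case that both s_rep(p₁) < s(p₁) and s_rep(p₂) > s(p₂). -/
import Mathlib

/-- For D'Hondt seat allocation (formalized by the property that every colored cell
`v p / k`, `1 ≤ k ≤ s p`, is strictly larger than every uncolored cell `v q / j`,
`s q < j ≤ S`), if `v p₁ / (s_rep p₁ + 1) < v p₂ / s_rep p₂` for a reported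
allocation `s_rep` summing to `S`, then it is not the case that both
`s_rep p₁ < s p₁` and `s_rep p₂ > s p₂`. -/
theorem dhondt_move_seat {P : Type*} [Fintype P]
    (v : P → ℝ) (S : ℕ) (s : P → ℕ)
    (hsum : ∑ p, s p = S)
    (hdom : ∀ p q : P, ∀ k j : ℕ, 1 ≤ k → k ≤ s p → s q < j → j ≤ S →
      v q / (j : ℝ) < v p / (k : ℝ))
    (srep : P → ℕ) (hrepsum : ∑ p, srep p = S)
    (p₁ p₂ : P) (hne : p₁ ≠ p₂) (hs₂ : 1 ≤ srep p₂)
    (hineq : v p₁ / ((srep p₁ : ℝ) + 1) < v p₂ / (srep p₂ : ℝ)) :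
    ¬(srep p₁ < s p₁ ∧ s p₂ < srep p₂) := by
  rintro ⟨h1, h2⟩
  have hle : srep p₂ ≤ S := by
    rw [← hrepsum]
    exact Finset.single_le_sum (fun i _ => Nat.zero_le _) (Finset.mem_univ p₂)
  have := hdom p₁ p₂ (srep p₁ + 1) (srep p₂) (Nat.le_add_left 1 _) h1 h2 hle
  push_cast at this
  linarith
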